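/- Let G₁, G₂ be countable infinite groups, Σ a finite set, φ : G₁ → G₂ a surjective group homomorphism, and let X ⊆ Σ^{G₂} and Y ⊆ Σ^{G₁} be minimal subshifts. If π : X → Y is a surjective continuous map that is φ-equivariant, i.e., σ_{G₁}^g(π(x)) = π(σ_{G₂}^{φ(g)} x) for all g ∈ G₁ and x ∈ X, then (π × ⋯ × π)(IN_n(X)) = IN_n(Y) for each n ∈ ℕ. -/

import Mathlib

open Filter Set Topology Pointwise

/-- The left shift action of `G` on `G → A`: `(shift g x) h = x (g⁻¹ * h)`. -/
def shift {G : Type*} [Group G] {A : Type*} (g : G) (x : G → A) : G → A :=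
  fun h => x (g⁻¹ * h)

/-- A subshift: a closed shift-invariant subset of `A^G`. -/
def IsSubshift {G : Type*} [Group G] {A : Type*} [TopologicalSpace A]
    (X : Set (G → A)) : Prop :=
  IsClosed X ∧ ∀ (g : G), ∀ x ∈ X, shift g x ∈ X

/-- A minimal subshift: every orbit is dense in `X`. -/
def IsMinimalSubshift {G : Type*} [Group G] {A : Type*} [TopologicalSpace A]
    (X : Set (G → A)) : Prop :=
  X.Nonempty ∧ IsSubshift X ∧ ∀ x ∈ X, X ⊆ closure {y | ∃ g : G, y = shift g x}

/-- A free subshift: every point has trivial stabilizer. -/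
def IsFreeSubshift {G : Type*} [Group G] {A : Type*} (X : Set (G → A)) : Prop :=
  ∀ x ∈ X, ∀ g : G, shift g x = x → g = 1

/-- The shift action restricted to an invariant set, as an action on the subtype. -/
def subShift {G : Type*} [Group G] {A : Type*} [TopologicalSpace A] (X : Set (G → A))
    (hX : ∀ (g : G), ∀ x ∈ X, shift g x ∈ X) : G → ↥X → ↥X :=
  fun g x => ⟨shift g x.1, hX g x.1 x.2⟩

/-- Minimal cardinality of a (finite) subcover of `C` covering the whole space. -/
noncomputable def coverN {Z : Type*} (C : Set (Set Z)) : ℕ :=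
  sInf {n | ∃ F : Finset (Set Z), ↑F ⊆ C ∧ (∀ z : Z, ∃ U ∈ F, z ∈ U) ∧ F.card = n}

/-- The join `⋁_{i=1}^n a^{(S i)⁻¹} U` of the pullbacks of the cover `U` along a
sequence `S` in `G`. -/
def joinCover {G : Type*} [Group G] {Z : Type*} (a : G → Z → Z) (U : Set (Set Z))
    (S : ℕ → G) (n : ℕ) : Set (Set Z) :=
  {V | ∃ f : Fin n → Set Z, (∀ i, f i ∈ U) ∧ V = ⋂ i : Fin n, a (S i.val)⁻¹ '' f i}

/-- Sequence entropy of the action `a` with respect to the cover `U` along `S`. -/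
noncomputable def seqEntropyAlong {G : Type*} [Group G] {Z : Type*} [TopologicalSpace Z]
    (a : G → Z → Z) (U : Set (Set Z)) (S : ℕ → G) : EReal :=
  Filter.limsup
    (fun n : ℕ => ((Real.log (coverN (joinCover a U S n)) / n : ℝ) : EReal))
    Filter.atTop

/-- Topological sequence entropy of the action `a`: the supremum over all open covers
and all sequences in `G` of the corresponding sequence entropies. -/
noncomputable def topSeqEntropy {G : Type*} [Group G] {Z : Type*} [TopologicalSpace Z]
    (a : G → Z → Z) : EReal :=
  sSup {h | ∃ (U : Set (Set Z)) (S : ℕ → G),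
    (∀ V ∈ U, IsOpen V) ∧ ⋃₀ U = Set.univ ∧ h = seqEntropyAlong a U S}

/-- `J` is an independence set for the tuple of sets `U` under the action `a`. -/
def IsIndepSet {G : Type*} [Group G] {Z : Type*} (a : G → Z → Z) {k : ℕ}
    (U : Fin k → Set Z) (J : Set G) : Prop :=
  ∀ I : Finset G, ↑I ⊆ J → I.Nonempty → ∀ s : G → Fin k,
    (⋂ g ∈ I, a g⁻¹ '' U (s g)).Nonempty

/-- `x` is an `n`-IN-tuple: every product neighborhood admits independence sets of
arbitrarily large finite cardinality. -/
def IsINTuple {G : Type*} [Group G] {Z : Type*} [TopologicalSpace Z]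
    (a : G → Z → Z) {n : ℕ} (x : Fin n → Z) : Prop :=
  ∀ U : Fin n → Set Z, (∀ i, IsOpen (U i) ∧ x i ∈ U i) →
    ∀ N : ℕ, ∃ J : Finset G, N ≤ J.card ∧ IsIndepSet a U ↑J

/-- `x` is an `n`-IT-tuple: every product neighborhood admits an infinite
independence set. -/
def IsITTuple {G : Type*} [Group G] {Z : Type*} [TopologicalSpace Z]
    (a : G → Z → Z) {n : ℕ} (x : Fin n → Z) : Prop :=
  ∀ U : Fin n → Set Z, (∀ i, IsOpen (U i) ∧ x i ∈ U i) →
    ∃ J : Set G, J.Infinite ∧ IsIndepSet a U J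

/-- Topological entropy of the `ℤ`-action `a` (the classical entropy of the shift
homeomorphism), via open covers. -/
noncomputable def topEntropyZ {Z : Type*} [TopologicalSpace Z]
    (a : Multiplicative ℤ → Z → Z) : EReal :=
  sSup {h | ∃ U : Set (Set Z), (∀ V ∈ U, IsOpen V) ∧ ⋃₀ U = Set.univ ∧
    h = Filter.limsup
      (fun n : ℕ => ((Real.log (coverN
        (joinCover a U (fun i => Multiplicative.ofAdd (i : ℤ)) n)) / n : ℝ) : EReal))
      Filter.atTop}


open Set

section Ramsey

variable {κ : Type} [Finite κ]

/-- Infinite Ramsey theorem, relativized. -/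
theorem infRamsey : ∀ (m : ℕ) (f : Finset ℕ → κ) (X : Set ℕ), X.Infinite →
    ∃ H ⊆ X, H.Infinite ∧ ∃ c0, ∀ S : Finset ℕ, ↑S ⊆ H → S.card = m → f S = c0 := by
  intro m
  induction m with
  | zero =>
    intro f X hX
    refine ⟨X, le_refl _, hX, f ∅, fun S hS hcard => ?_⟩
    rw [Finset.card_eq_zero] at hcard
    rw [hcard]
  | succ m IH =>
    intro f X hX
    have key : ∀ Y : Set ℕ, Y.Infinite → ∃ (H' : Set ℕ), H'.Infinite ∧ H' ⊆ Y ∧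
        (∀ b ∈ H', sInf Y < b) ∧ ∃ c' : κ, ∀ S : Finset ℕ, ↑S ⊆ H' → S.card = m →
          f (insert (sInf Y) S) = c' := by
      intro Y hY
      obtain ⟨H', hsub, hinf, c', hc'⟩ :=
        IH (fun S => f (insert (sInf Y) S)) (Y ∩ Set.Ioi (sInf Y))
          (by
            have : Y \ Set.Iic (sInf Y) = Y ∩ Set.Ioi (sInf Y) := by
              ext x; simp [Set.mem_diff, Set.mem_Iic, Set.mem_Ioi, not_le]
            rw [← this]
            exact hY.diff (Set.finite_Iic _))
      exact ⟨H', hinf, fun x hx => (hsub hx).1, fun b hb => (hsub hb).2, c', hc'⟩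
    classical
    let next : {Y : Set ℕ // Y.Infinite} → {Y : Set ℕ // Y.Infinite} :=
      fun Y => ⟨(key Y.1 Y.2).choose, (key Y.1 Y.2).choose_spec.1⟩
    let col : {Y : Set ℕ // Y.Infinite} → κ :=
      fun Y => (key Y.1 Y.2).choose_spec.2.2.2.choose
    let chain : ℕ → {Y : Set ℕ // Y.Infinite} := fun i => next^[i] ⟨X, hX⟩
    have chain_succ : ∀ i, chain (i + 1) = next (chain i) := by
      intro i
      simp only [chain, Function.iterate_succ_apply']
    set a : ℕ → ℕ := fun i => sInf (chain i).1 with ha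
    set c : ℕ → κ := fun i => col (chain i) with hc
    have hmem : ∀ i, a i ∈ (chain i).1 := fun i => Nat.sInf_mem (chain i).2.nonempty
    have hsub' : ∀ i, (chain (i+1)).1 ⊆ (chain i).1 := by
      intro i
      rw [chain_succ i]
      exact (key (chain i).1 (chain i).2).choose_spec.2.1
    have hgt : ∀ i, ∀ b ∈ (chain (i+1)).1, a i < b := by
      intro i
      rw [chain_succ i]
      exact (key (chain i).1 (chain i).2).choose_spec.2.2.1
    have hhom : ∀ i, ∀ S : Finset ℕ, ↑S ⊆ (chain (i+1)).1 → S.card = m →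
        f (insert (a i) S) = c i := by
      intro i
      have h2 := (key (chain i).1 (chain i).2).choose_spec.2.2.2.choose_spec
      intro S hS hcard
      rw [chain_succ i] at hS
      exact h2 S hS hcard
    have hchain_mono : ∀ i j, i ≤ j → (chain j).1 ⊆ (chain i).1 := by
      intro i j hij
      induction hij with
      | refl => exact le_refl _
      | step h IHj => exact IHj.trans' (hsub' _)
    have hamono : StrictMono a := by
      apply strictMono_nat_of_lt_succ
      intro i
      exact hgt i _ (hmem (i+1))
    -- pigeonhole on colors
    obtain ⟨c0, hc0⟩ := Finite.exists_infinite_fiber c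
    have hT : (c ⁻¹' {c0}).Infinite := Set.infinite_coe_iff.mp hc0
    refine ⟨a '' (c ⁻¹' {c0}), ?_, hT.image (hamono.injective.injOn), c0, ?_⟩
    · rintro x ⟨i, _, rfl⟩
      have : (chain i).1 ⊆ (chain 0).1 := hchain_mono 0 i (Nat.zero_le i)
      exact this (hmem i)
    · intro S hS hcard
      have hne : S.Nonempty := by
        rw [← Finset.card_pos, hcard]; omega
      set b := S.min' hne with hb
      have hbS : b ∈ S := S.min'_mem hne
      obtain ⟨i, hiT, hib⟩ := hS hbS
      have herase : ↑(S.erase b) ⊆ (chain (i+1)).1 := by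
        intro x hx
        rw [Finset.coe_erase] at hx
        obtain ⟨hxS, hxb⟩ := hx
        obtain ⟨j, _, hjx⟩ := hS hxS
        have hbx : b < x := lt_of_le_of_ne (S.min'_le x hxS) (by
          intro h; exact hxb (by simp [h]))
        have hij : i < j := by
          by_contra h
          push_neg at h
          have := hamono.le_iff_le.mpr h
          omega
        have : (chain j).1 ⊆ (chain (i+1)).1 := hchain_mono (i+1) j (by omega)
        exact this (hjx ▸ hmem j)
      have hcard' : (S.erase b).card = m := by
        rw [Finset.card_erase_of_mem hbS, hcard]; omega
      have := hhom i (S.erase b) herase hcard'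
      rw [hib] at this
      rw [Finset.insert_erase hbS] at this
      rw [this]
      exact hiT
  
/-- Finite Ramsey theorem via compactness. -/
theorem finRamsey [Nonempty κ] (m s : ℕ) :
    ∃ N : ℕ, ∀ f : Finset ℕ → κ, ∃ H : Finset ℕ, (∀ x ∈ H, x < N) ∧ H.card = s ∧
      ∃ c0, ∀ S ⊆ H, S.card = m → f S = c0 := by
  classical
  by_contra hbad
  push_neg at hbad
  choose f hf using hbad
  let U := Filter.hyperfilter ℕ
  have hsel : ∀ S : Finset ℕ, ∃ c : κ, {N | f N S = c} ∈ U := by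
    intro S
    by_contra hno
    push_neg at hno
    have hcompl : ∀ c : κ, {N | f N S = c}ᶜ ∈ U := by
      intro c
      exact Ultrafilter.compl_mem_iff_notMem.mpr (hno c)
    letI : Fintype κ := Fintype.ofFinite κ
    have hint : (⋂ c ∈ (Finset.univ : Finset κ), {N | f N S = c}ᶜ) ∈ U :=
      (Filter.biInter_finset_mem _).mpr (fun c _ => hcompl c)
    have hempty : (⋂ c ∈ (Finset.univ : Finset κ), {N | f N S = c}ᶜ) = ∅ := by
      ext N
      simp only [Set.mem_iInter, Set.mem_compl_iff, Set.mem_setOf_eq, Set.mem_empty_iff_false,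
        iff_false, not_forall, not_not]
      exact ⟨f N S, Finset.mem_univ _, rfl⟩
    rw [hempty] at hint
    exact (Filter.empty_notMem (U : Filter ℕ)) hint
  choose gsel hgsel using hsel
  obtain ⟨Hinf, _, hinf, c0, hhom⟩ := infRamsey m gsel Set.univ Set.infinite_univ
  obtain ⟨F, hFsub, hFcard⟩ := hinf.exists_subset_card_eq s
  let SS := F.powerset.filter (fun S => S.card = m)
  have hA : (⋂ S ∈ SS, {N | f N S = gsel S}) ∈ U :=
    (Filter.biInter_finset_mem _).mpr (fun S _ => hgsel S)
  have hB : {N : ℕ | F.sup id < N} ∈ U := by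
    have : {N : ℕ | F.sup id < N}ᶜ.Finite := by
      have : {N : ℕ | F.sup id < N}ᶜ = Set.Iic (F.sup id) := by
        ext x; simp [Set.mem_Iic, not_lt]
      rw [this]; exact Set.finite_Iic _
    exact Filter.mem_hyperfilter_of_finite_compl this
  have hAB := Filter.inter_mem hA hB
  obtain ⟨N, hNA, hNB⟩ := Ultrafilter.nonempty_of_mem hAB
  obtain ⟨S, hS, hcard, hne⟩ := hf N F
    (fun x hx => lt_of_le_of_lt (Finset.le_sup (f := id) hx) hNB) hFcard c0
  apply hne
  have hSSS : S ∈ SS := by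
    simp only [SS, Finset.mem_filter, Finset.mem_powerset]
    exact ⟨hS, hcard⟩
  have h1 : f N S = gsel S := Set.mem_iInter₂.mp hNA S hSSS
  rw [h1]
  exact hhom S ((Finset.coe_subset.mpr hS).trans hFsub) hcard

end Ramsey

section Indep
variable {G Z : Type*}

def FinIndep {k : ℕ} (V : G → Fin k → Set Z) (J : Finset G) : Prop :=
  ∀ I : Finset G, I ⊆ J → I.Nonempty → ∀ s : G → Fin k, (⋂ g ∈ I, V g (s g)).Nonempty

theorem FinIndep.mono {k : ℕ} {V W : G → Fin k → Set Z} {J : Finset G}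
    (h : FinIndep V J) (hVW : ∀ g i, V g i ⊆ W g i) : FinIndep W J := by
  intro I hI hne s
  obtain ⟨z, hz⟩ := h I hI hne s
  refine ⟨z, ?_⟩
  rw [Set.mem_iInter₂] at hz ⊢
  exact fun g hg => hVW g (s g) (hz g hg)

theorem FinIndep.anti {k : ℕ} {V : G → Fin k → Set Z} {J J' : Finset G}
    (h : FinIndep V J) (hJ : J' ⊆ J) : FinIndep V J' :=
  fun I hI hne s => h I (hI.trans hJ) hne s

/-- The finite union lemma for independence sets (Kerr–Li style, weak bounds). -/
theorem finUnionLemma {k : ℕ} (m : ℕ) (i₀ : Fin k)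
    (V : G → Fin k → Set Z) (B C : G → Set Z)
    (hsplit : ∀ g, V g i₀ = B g ∪ C g) :
    ∃ M : ℕ, ∀ J : Finset G, M ≤ J.card → FinIndep V J →
      ∃ J' : Finset G, J' ⊆ J ∧ m ≤ J'.card ∧
        ((FinIndep (fun g i => if i = i₀ then B g else V g i) J') ∨
         (FinIndep (fun g i => if i = i₀ then C g else V g i) J') ) := by
  classical
  rcases Nat.eq_zero_or_pos m with hm | hm
  · refine ⟨0, fun J _ _ => ⟨∅, Finset.empty_subset J, by omega, Or.inl ?_⟩⟩
    intro I hI hne s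
    rw [Finset.subset_empty] at hI
    exact absurd hI hne.ne_empty
  have hk : 0 < k := i₀.pos
  set s := 2 * m * k with hs
  have hspos : 0 < s := by positivity
  obtain ⟨N, hN⟩ := finRamsey (κ := (Fin m → Fin k) → Prop × Prop) m s
  refine ⟨N, fun J hJcard hind => ?_⟩
  -- N is at least 1
  have hN1 : 0 < N := by
    obtain ⟨H, hHlt, hHcard, -⟩ := hN (fun _ => fun _ => (True, True))
    have : H.Nonempty := by rw [← Finset.card_pos, hHcard]; omega
    obtain ⟨x, hx⟩ := this
    exact lt_of_le_of_lt (Nat.zero_le x) (hHlt x hx)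
  have hJne : J.Nonempty := by
    rw [← Finset.card_pos]; omega
  -- enumeration of J
  set u : ℕ → G := fun i => J.toList.getD i hJne.choose with hu
  have hulen : J.toList.length = J.card := Finset.length_toList J
  have humem : ∀ i, i < J.card → u i ∈ J := by
    intro i hi
    rw [hu]
    simp only
    rw [List.getD_eq_getElem _ _ (by omega)]
    rw [← Finset.mem_toList]
    exact List.getElem_mem _
  have huinj : ∀ i i', i < J.card → i' < J.card → u i = u i' → i = i' := by
    intro i i' hi hi' he
    rw [hu] at he
    simp only at he
    rw [List.getD_eq_getElem _ _ (by omega), List.getD_eq_getElem _ _ (by omega)] at he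
    exact (J.nodup_toList.getElem_inj_iff).mp he
  -- witnessability predicate
  set Wit : ∀ (S : Finset ℕ), S.card = m → (Fin m → Fin k) → (G → Set Z) → Prop :=
    fun S h τ D => ∃ z : Z, ∀ j : Fin m,
      z ∈ (if τ j = i₀ then D (u (S.orderEmbOfFin h j)) else
        V (u (S.orderEmbOfFin h j)) (τ j)) with hWit
  set f : Finset ℕ → ((Fin m → Fin k) → Prop × Prop) := fun S =>
    if h : S.card = m then (fun τ => (Wit S h τ B, Wit S h τ C)) else
      (fun _ => (True, True)) with hf
  obtain ⟨H, hHlt, hHcard, c0, hhom⟩ := hN f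
  -- mega-pattern
  set e : Fin s ↪o ℕ := H.orderEmbOfFin hHcard with he
  have heltN : ∀ p : Fin s, (e p) < N := fun p => hHlt _ (H.orderEmbOfFin_mem hHcard p)
  have hemem : ∀ p : Fin s, u (e p) ∈ J := fun p => humem _ (lt_of_lt_of_le (heltN p) hJcard)
  have hueinj : ∀ p q : Fin s, u (e p) = u (e q) → p = q := by
    intro p q hpq
    have := huinj _ _ (lt_of_lt_of_le (heltN p) hJcard) (lt_of_lt_of_le (heltN q) hJcard) hpq
    exact e.injective (by exact_mod_cast this)
  -- index arithmetic
  have hidx : ∀ (r : Fin (2*m)) (v : Fin k), r.val * k + v.val < s := by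
    intro r v
    calc r.val * k + v.val < r.val * k + k := by omega
    _ = (r.val + 1) * k := by ring
    _ ≤ 2 * m * k := Nat.mul_le_mul_right k (by omega)
  set idx : Fin (2*m) → Fin k → Fin s := fun r v => ⟨r.val * k + v.val, hidx r v⟩ with hidxdef
  set Qv : Fin s → Fin k := fun p => ⟨p.val % k, Nat.mod_lt _ hk⟩ with hQv
  have hQvidx : ∀ r v, Qv (idx r v) = v := by
    intro r v
    simp only [hQv, hidxdef]
    ext
    simp only
    rw [Nat.mul_comm, Nat.mul_add_mod]
    exact Nat.mod_eq_of_lt v.isLt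
  set sQ : G → Fin k := fun g => if hg : ∃ p : Fin s, u (e p) = g then Qv hg.choose else i₀
    with hsQ
  have hsQspec : ∀ p : Fin s, sQ (u (e p)) = Qv p := by
    intro p
    simp only [hsQ]
    have hex : ∃ q : Fin s, u (e q) = u (e p) := ⟨p, rfl⟩
    simp only [dif_pos hex]
    congr 1
    exact hueinj _ _ hex.choose_spec
  -- the mega-witness
  set I₀ : Finset G := Finset.image (fun p : Fin s => u (e p)) Finset.univ with hI₀
  have hI₀J : I₀ ⊆ J := by
    intro g hg
    rw [hI₀, Finset.mem_image] at hg
    obtain ⟨p, _, rfl⟩ := hg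
    exact hemem p
  have hI₀ne : I₀.Nonempty := ⟨u (e ⟨0, hspos⟩), by
    rw [hI₀, Finset.mem_image]; exact ⟨⟨0, hspos⟩, Finset.mem_univ _, rfl⟩⟩
  obtain ⟨x₀, hx₀⟩ := hind I₀ hI₀J hI₀ne sQ
  rw [Set.mem_iInter₂] at hx₀
  have hx₀' : ∀ p : Fin s, x₀ ∈ V (u (e p)) (Qv p) := by
    intro p
    have := hx₀ (u (e p)) (by rw [hI₀, Finset.mem_image]; exact ⟨p, Finset.mem_univ _, rfl⟩)
    rwa [hsQspec] at this
  -- colors of the i₀-slots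
  set cb : Fin (2*m) → Prop := fun r => x₀ ∈ B (u (e (idx r i₀))) with hcb
  have hcbC : ∀ r, ¬ cb r → x₀ ∈ C (u (e (idx r i₀))) := by
    intro r hr
    have := hx₀' (idx r i₀)
    rw [hQvidx, hsplit] at this
    rcases this with h | h
    · exact absurd h hr
    · exact h
  -- pigeonhole for a monochromatic set of m rows
  have hpig : ∃ (ε : Prop) (T : Finset (Fin (2*m))), T.card = m ∧
      ((ε ∧ ∀ r ∈ T, cb r) ∨ (¬ε ∧ ∀ r ∈ T, ¬ cb r)) := by
    set Tt := Finset.univ.filter (fun r => cb r) with hTt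
    set Tf := Finset.univ.filter (fun r => ¬ cb r) with hTf
    have hcards : Tt.card + Tf.card = 2 * m := by
      rw [hTt, hTf]
      rw [Finset.card_filter_add_card_filter_not]
      simp
    rcases le_total m Tt.card with h | h
    · obtain ⟨T, hT, hTcard⟩ := Finset.exists_subset_card_eq h
      refine ⟨True, T, hTcard, Or.inl ⟨trivial, fun r hr => ?_⟩⟩
      have := hT hr
      rw [hTt, Finset.mem_filter] at this
      exact this.2
    · have hf' : m ≤ Tf.card := by omega
      obtain ⟨T, hT, hTcard⟩ := Finset.exists_subset_card_eq hf'
      refine ⟨False, T, hTcard, Or.inr ⟨not_false, fun r hr => ?_⟩⟩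
      have := hT hr
      rw [hTf, Finset.mem_filter] at this
      exact this.2
  obtain ⟨ε, T, hTcard, hTmono⟩ := hpig
  set cmap : Fin m ↪o Fin (2*m) := T.orderEmbOfFin hTcard with hcmap
  have hcmapT : ∀ j, cmap j ∈ T := fun j => T.orderEmbOfFin_mem hTcard j
  -- the reading positions
  have hread : ∀ τ : Fin m → Fin k, StrictMono (fun j => e (idx (cmap j) (τ j))) := by
    intro τ j j' hjj'
    apply e.strictMono
    simp only [hidxdef, Fin.mk_lt_mk]
    have h1 : cmap j < cmap j' := cmap.strictMono hjj'
    have h2 : ((cmap j).val + 1) * k ≤ (cmap j').val * k :=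
      Nat.mul_le_mul_right k (by exact_mod_cast h1)
    have h3 := (τ j).isLt
    nlinarith [h3, h2]
  -- each pattern is ε-monochromatically witnessable on its reading set
  have hwitread : ∀ τ : Fin m → Fin k, ∃ (S : Finset ℕ) (hS : S.card = m),
      S ⊆ H ∧ ((ε → Wit S hS τ B) ∧ (¬ε → Wit S hS τ C)) := by
    intro τ
    set g : Fin m → ℕ := fun j => e (idx (cmap j) (τ j)) with hg
    set S : Finset ℕ := Finset.image g Finset.univ with hS
    have hginj : Function.Injective g := (hread τ).injective
    have hcard : S.card = m := by
      rw [hS, Finset.card_image_of_injective _ hginj, Finset.card_univ, Fintype.card_fin]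
    have hsubH : S ⊆ H := by
      intro x hx
      rw [hS, Finset.mem_image] at hx
      obtain ⟨j, _, rfl⟩ := hx
      exact H.orderEmbOfFin_mem hHcard _
    have henum : ∀ j, S.orderEmbOfFin hcard j = g j := by
      have := Finset.orderEmbOfFin_unique (f := g) hcard
        (fun j => by rw [hS, Finset.mem_image]; exact ⟨j, Finset.mem_univ _, rfl⟩)
        (hread τ)
      intro j; exact (congrFun this j).symm
    refine ⟨S, hcard, hsubH, ?_, ?_⟩
    all_goals intro hε
    · -- ε holds: B-witness
      refine ⟨x₀, fun j => ?_⟩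
      rw [henum j]
      by_cases hτ : τ j = i₀
      · rw [if_pos hτ]
        have : g j = e (idx (cmap j) i₀) := by simp only [hg, hτ]
        rw [this]
        rcases hTmono with ⟨-, hall⟩ | ⟨hne, -⟩
        · exact hall _ (hcmapT j)
        · exact absurd hε hne
      · rw [if_neg hτ]
        have := hx₀' (idx (cmap j) (τ j))
        rw [hQvidx] at this
        exact this
    · -- ¬ε: C-witness
      refine ⟨x₀, fun j => ?_⟩
      rw [henum j]
      by_cases hτ : τ j = i₀
      · rw [if_pos hτ]
        have hgj : g j = e (idx (cmap j) i₀) := by simp only [hg, hτ]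
        rw [hgj]
        rcases hTmono with ⟨hεt, -⟩ | ⟨-, hall⟩
        · exact absurd hεt hε
        · exact hcbC _ (hall _ (hcmapT j))
      · rw [if_neg hτ]
        have := hx₀' (idx (cmap j) (τ j))
        rw [hQvidx] at this
        exact this
  -- transfer to the homogeneous color
  have hc0 : ∀ τ : Fin m → Fin k,
      (ε → (c0 τ).1) ∧ (¬ε → (c0 τ).2) := by
    intro τ
    obtain ⟨S, hScard, hSsub, hB, hC⟩ := hwitread τ
    have hfS : f S = c0 := hhom S hSsub hScard
    simp only [hf, dif_pos hScard] at hfS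
    constructor
    · intro hε
      have : (c0 τ).1 = Wit S hScard τ B := by rw [← hfS]
      rw [this]; exact hB hε
    · intro hε
      have : (c0 τ).2 = Wit S hScard τ C := by rw [← hfS]
      rw [this]; exact hC hε
  -- choose the final set J'
  obtain ⟨H₀, hH₀sub, hH₀card⟩ := Finset.exists_subset_card_eq
    (show m ≤ H.card by rw [hHcard, hs]; nlinarith)
  set e₀ : Fin m ↪o ℕ := H₀.orderEmbOfFin hH₀card with he₀
  have he₀memH : ∀ j, e₀ j ∈ H := fun j => hH₀sub (H₀.orderEmbOfFin_mem hH₀card j)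
  have he₀N : ∀ j, e₀ j < N := fun j => hHlt _ (he₀memH j)
  have he₀J : ∀ j, u (e₀ j) ∈ J := fun j => humem _ (lt_of_lt_of_le (he₀N j) hJcard)
  set J' : Finset G := Finset.image (fun j => u (e₀ j)) Finset.univ with hJ'
  have hJ'sub : J' ⊆ J := by
    intro g hg
    rw [hJ', Finset.mem_image] at hg
    obtain ⟨j, -, rfl⟩ := hg
    exact he₀J j
  have hJ'card : J'.card = m := by
    rw [hJ']
    rw [Finset.card_image_of_injOn, Finset.card_univ, Fintype.card_fin]
    intro j _ j' _ hjj'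
    have := huinj _ _ (lt_of_lt_of_le (he₀N j) hJcard) (lt_of_lt_of_le (he₀N j') hJcard) hjj'
    exact e₀.injective (by exact_mod_cast this)
  have hfH₀ : f H₀ = c0 := hhom H₀ hH₀sub hH₀card
  -- the final independence property, for either side
  have main : ∀ (D : G → Set Z),
      (∀ τ (hScard : H₀.card = m), Wit H₀ hScard τ D) →
      FinIndep (fun g i => if i = i₀ then D g else V g i) J' := by
    intro D hWitAll I hI hne s'
    set τ : Fin m → Fin k := fun j => if u (e₀ j) ∈ I then s' (u (e₀ j)) else i₀ with hτ
    obtain ⟨z, hz⟩ := hWitAll τ hH₀card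
    refine ⟨z, ?_⟩
    rw [Set.mem_iInter₂]
    intro g hg
    have hgJ' := hI hg
    rw [hJ', Finset.mem_image] at hgJ'
    obtain ⟨j, -, rfl⟩ := hgJ'
    have hzj := hz j
    have hτj : τ j = s' (u (e₀ j)) := by simp only [hτ]; rw [if_pos hg]
    show z ∈ if s' (u (e₀ j)) = i₀ then D (u (e₀ j)) else V (u (e₀ j)) (s' (u (e₀ j)))
    by_cases hcase : s' (u (e₀ j)) = i₀
    · rw [if_pos hcase]
      rw [hτj, if_pos hcase] at hzj
      exact hzj
    · rw [if_neg hcase]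
      rw [hτj, if_neg hcase] at hzj
      exact hzj
  refine ⟨J', hJ'sub, le_of_eq hJ'card.symm, ?_⟩
  by_cases hε : ε
  · left
    apply main
    intro τ hScard
    have h1 := (hc0 τ).1 hε
    have h2 : f H₀ = fun τ => (Wit H₀ hH₀card τ B, Wit H₀ hH₀card τ C) := by
      simp only [hf, dif_pos hH₀card]
    have h3 : c0 τ = (Wit H₀ hH₀card τ B, Wit H₀ hH₀card τ C) := by
      rw [← hfH₀, h2]
    rw [h3] at h1
    exact h1
  · right
    apply main
    intro τ hScard
    have h1 := (hc0 τ).2 hε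
    have h2 : f H₀ = fun τ => (Wit H₀ hH₀card τ B, Wit H₀ hH₀card τ C) := by
      simp only [hf, dif_pos hH₀card]
    have h3 : c0 τ = (Wit H₀ hH₀card τ B, Wit H₀ hH₀card τ C) := by
      rw [← hfH₀, h2]
    rw [h3] at h1
    exact h1

end Indep

section Unb
variable {G Z : Type*}

def UnbIndep {k : ℕ} (V : G → Fin k → Set Z) : Prop :=
  ∀ N : ℕ, ∃ J : Finset G, N ≤ J.card ∧ FinIndep V J

theorem UnbIndep.mono {k : ℕ} {V W : G → Fin k → Set Z}
    (h : UnbIndep V) (hVW : ∀ g i, V g i ⊆ W g i) : UnbIndep W := by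
  intro N
  obtain ⟨J, hc, hi⟩ := h N
  exact ⟨J, hc, hi.mono hVW⟩

theorem UnbIndep.union {k : ℕ} {V : G → Fin k → Set Z} {i₀ : Fin k} {B C : G → Set Z}
    (hsplit : ∀ g, V g i₀ = B g ∪ C g) (h : UnbIndep V) :
    UnbIndep (fun g i => if i = i₀ then B g else V g i) ∨
    UnbIndep (fun g i => if i = i₀ then C g else V g i) := by
  classical
  have key : ∀ m : ℕ,
      (∃ J' : Finset G, m ≤ J'.card ∧ FinIndep (fun g i => if i = i₀ then B g else V g i) J') ∨
      (∃ J' : Finset G, m ≤ J'.card ∧ FinIndep (fun g i => if i = i₀ then C g else V g i) J') := by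
    intro m
    obtain ⟨M, hM⟩ := finUnionLemma m i₀ V B C hsplit
    obtain ⟨J, hJc, hJi⟩ := h M
    obtain ⟨J', -, h1, h2 | h2⟩ := hM J hJc hJi
    · exact Or.inl ⟨J', h1, h2⟩
    · exact Or.inr ⟨J', h1, h2⟩
  by_contra hcon
  push_neg at hcon
  obtain ⟨hB, hC⟩ := hcon
  rw [UnbIndep] at hB hC
  push_neg at hB hC
  obtain ⟨NB, hNB⟩ := hB
  obtain ⟨NC, hNC⟩ := hC
  rcases key (max NB NC) with ⟨J', hc, hi⟩ | ⟨J', hc, hi⟩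
  · exact hNB J' (le_trans (le_max_left _ _) hc) hi
  · exact hNC J' (le_trans (le_max_right _ _) hc) hi

theorem UnbIndep.biUnion {k : ℕ} {ι : Type*} {i₀ : Fin k} (t : Finset ι) (D : ι → G → Set Z) :
    ∀ V : G → Fin k → Set Z, (∀ g, V g i₀ = ⋃ w ∈ t, D w g) → UnbIndep V →
      ∃ w ∈ t, UnbIndep (fun g i => if i = i₀ then D w g else V g i) := by
  classical
  induction t using Finset.induction_on with
  | empty =>
    intro V hV h
    exfalso
    obtain ⟨J, hc, hi⟩ := h 1
    have hJne : J.Nonempty := by rw [← Finset.card_pos]; omega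
    obtain ⟨g₀, hg₀⟩ := hJne
    obtain ⟨z, hz⟩ := hi {g₀} (Finset.singleton_subset_iff.mpr hg₀) ⟨g₀, Finset.mem_singleton_self g₀⟩
      (fun _ => i₀)
    rw [Set.mem_iInter₂] at hz
    have := hz g₀ (Finset.mem_singleton_self g₀)
    rw [hV g₀] at this
    simp at this
  | insert a t' hat IH =>
    intro V hV h
    have hsplit : ∀ g, V g i₀ = D a g ∪ ⋃ w ∈ t', D w g := by
      intro g
      rw [hV g, Finset.set_biUnion_insert]
    rcases UnbIndep.union hsplit h with h1 | h1
    · exact ⟨a, Finset.mem_insert_self a t', h1⟩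
    · obtain ⟨w, hw, hw2⟩ := IH (fun g i => if i = i₀ then (⋃ w ∈ t', D w g) else V g i)
        (fun g => by simp) h1
      refine ⟨w, Finset.mem_insert_of_mem hw, ?_⟩
      have heq : (fun (g : G) (i : Fin k) => if i = i₀ then D w g else
          (fun (g : G) (i : Fin k) => if i = i₀ then (⋃ w ∈ t', D w g) else V g i) g i)
          = (fun g i => if i = i₀ then D w g else V g i) := by
        funext g i
        by_cases hi : i = i₀
        · simp [hi]
        · simp [hi]
      rwa [heq] at hw2

end Unb

section Zoom
variable {G Z ι : Type*}

theorem zoom_coord {n : ℕ} (F : G → Set Z → Set Z)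
    (hFunion : ∀ (g : G) (κ' : ι → Set Z) (t : Finset ι),
      F g (⋃ w ∈ t, κ' w) = ⋃ w ∈ t, F g (κ' w))
    [Nonempty ι]
    (Cc Q : Fin n → Set Z) (t₀ : Finset ι) (Pm : ι → Set Z)
    (hcover : ∀ z : Z, ∃ w ∈ t₀, z ∈ Pm w)
    (h : UnbIndep (fun g i => F g (Cc i ∩ Q i))) :
    ∃ wsel : Fin n → ι, UnbIndep (fun g i => F g ((Cc i ∩ Pm (wsel i)) ∩ Q i)) := by
  classical
  have main : ∀ s : Finset (Fin n), ∃ wsel : Fin n → ι,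
      UnbIndep (fun g i => F g ((if i ∈ s then Cc i ∩ Pm (wsel i) else Cc i) ∩ Q i)) := by
    intro s
    induction s using Finset.induction_on with
    | empty =>
      refine ⟨fun _ => Classical.arbitrary ι, ?_⟩
      have : (fun (g : G) (i : Fin n) =>
          F g ((if i ∈ (∅ : Finset (Fin n)) then Cc i ∩ Pm (Classical.arbitrary ι) else Cc i) ∩ Q i))
          = fun g i => F g (Cc i ∩ Q i) := by
        funext g i; simp
      rwa [this]
    | insert a s' ha IH =>
      obtain ⟨wsel, hw⟩ := IH
      set Vc : G → Fin n → Set Z :=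
        fun g i => F g ((if i ∈ s' then Cc i ∩ Pm (wsel i) else Cc i) ∩ Q i) with hVc
      have hsplit : ∀ g : G, Vc g a = ⋃ w ∈ t₀, F g ((Cc a ∩ Pm w) ∩ Q a) := by
        intro g
        have h1 : Cc a ∩ Q a = ⋃ w ∈ t₀, ((Cc a ∩ Pm w) ∩ Q a) := by
          ext z
          simp only [Set.mem_iUnion, Set.mem_inter_iff]
          constructor
          · rintro ⟨h1, h2⟩
            obtain ⟨w, hwt, hwz⟩ := hcover z
            exact ⟨w, hwt, ⟨h1, hwz⟩, h2⟩
          · rintro ⟨w, hwt, ⟨h1, -⟩, h2⟩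
            exact ⟨h1, h2⟩
        rw [hVc]
        simp only [if_neg ha]
        rw [h1, hFunion]
      rcases UnbIndep.biUnion (i₀ := a) t₀ (fun w g => F g ((Cc a ∩ Pm w) ∩ Q a)) Vc hsplit hw
        with ⟨w, hwt, hU⟩
      refine ⟨Function.update wsel a w, ?_⟩
      have heq : (fun (g : G) (i : Fin n) => if i = a then F g ((Cc a ∩ Pm w) ∩ Q a) else Vc g i)
          = fun g i => F g ((if i ∈ insert a s' then Cc i ∩ Pm (Function.update wsel a w i)
              else Cc i) ∩ Q i) := by
        funext g i
        by_cases hia : i = a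
        · subst hia
          rw [if_pos rfl, if_pos (Finset.mem_insert_self i s'), Function.update_self]
        · rw [if_neg hia, hVc]
          simp only [Function.update_of_ne hia, Finset.mem_insert, hia, false_or]
      rwa [heq] at hU
  obtain ⟨wsel, hw⟩ := main Finset.univ
  refine ⟨wsel, ?_⟩
  have : (fun (g : G) (i : Fin n) =>
      F g ((if i ∈ (Finset.univ : Finset (Fin n)) then Cc i ∩ Pm (wsel i) else Cc i) ∩ Q i))
      = fun g i => F g ((Cc i ∩ Pm (wsel i)) ∩ Q i) := by
    funext g i; simp
  rwa [this] at hw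

theorem zoom_pigeon [Finite ι] [Nonempty ι] {n : ℕ} (F : G → Set Z → Set Z)
    (hFmono : ∀ g : G, Monotone (F g))
    (hFunion : ∀ (g : G) (κ' : ι → Set Z) (t : Finset ι),
      F g (⋃ w ∈ t, κ' w) = ⋃ w ∈ t, F g (κ' w))
    (Cc : Fin n → Set Z) (Q : Fin n → ℕ → Set Z) (hQanti : ∀ i (p q : ℕ), p ≤ q → Q i q ⊆ Q i p)
    (Pm : ι → Set Z) (hcover : ∀ z : Z, ∃ w : ι, z ∈ Pm w)
    (h : ∀ p, UnbIndep (fun g i => F g (Cc i ∩ Q i p))) :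
    ∃ wsel : Fin n → ι, ∀ p, UnbIndep (fun g i => F g ((Cc i ∩ Pm (wsel i)) ∩ Q i p)) := by
  classical
  letI : Fintype ι := Fintype.ofFinite ι
  have hc : ∀ p : ℕ, ∃ wsel : Fin n → ι,
      UnbIndep (fun g i => F g ((Cc i ∩ Pm (wsel i)) ∩ Q i p)) := by
    intro p
    exact zoom_coord F hFunion Cc (fun i => Q i p) Finset.univ Pm
      (fun z => by obtain ⟨w, hw⟩ := hcover z; exact ⟨w, Finset.mem_univ w, hw⟩) (h p)
  choose wselp hwselp using hc
  obtain ⟨wstar, hwstar⟩ := Finite.exists_infinite_fiber wselp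
  have hwinf := Set.infinite_coe_iff.mp hwstar
  refine ⟨wstar, fun p N => ?_⟩
  obtain ⟨p', hp'mem, hpp'⟩ := hwinf.exists_gt p
  have h1 := hwselp p'
  have hp'eq : wselp p' = wstar := hp'mem
  rw [hp'eq] at h1
  obtain ⟨J, hJc, hJi⟩ := h1 N
  refine ⟨J, hJc, hJi.mono ?_⟩
  intro g i
  apply hFmono
  exact Set.inter_subset_inter_right _ (hQanti i p p' hpp'.le)

end Zoom

section ShiftLemmas
variable {G : Type*} [Group G] {A : Type*}

theorem shift_one (x : G → A) : shift (1 : G) x = x := by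
  funext h; simp [shift]

theorem shift_mul (g g' : G) (x : G → A) : shift g (shift g' x) = shift (g * g') x := by
  funext h; simp [shift, mul_assoc]

theorem shift_continuous [TopologicalSpace A] (g : G) : Continuous (shift (A := A) g) := by
  apply continuous_pi
  intro h
  exact continuous_apply (g⁻¹ * h)

variable [TopologicalSpace A] {X : Set (G → A)} (hX : ∀ g : G, ∀ x ∈ X, shift g x ∈ X)

theorem subShift_val (g : G) (x : ↥X) : (subShift X hX g x).val = shift g x.val := rfl

theorem subShift_one (x : ↥X) : subShift X hX 1 x = x := Subtype.ext (shift_one _)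

theorem subShift_mul (g g' : G) (x : ↥X) :
    subShift X hX g (subShift X hX g' x) = subShift X hX (g * g') x :=
  Subtype.ext (shift_mul g g' x.val)

theorem subShift_continuous (g : G) : Continuous (subShift X hX g) := by
  apply Continuous.subtype_mk
  exact (shift_continuous g).comp continuous_subtype_val

theorem mem_subShift_inv_image (g : G) (S : Set ↥X) (z : ↥X) :
    z ∈ (subShift X hX g⁻¹) '' S ↔ subShift X hX g z ∈ S := by
  constructor
  · rintro ⟨w, hw, rfl⟩
    rwa [subShift_mul, mul_inv_cancel, subShift_one]
  · intro hz
    exact ⟨subShift X hX g z, hz, by rw [subShift_mul, inv_mul_cancel, subShift_one]⟩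

end ShiftLemmas

section Cyl
variable {G : Type*} {A : Type*} [TopologicalSpace A] [DiscreteTopology A]
  {S : Set (G → A)} (κ : ℕ → G)

theorem cyl_isClosed (v : ℕ → A) (p : ℕ) :
    IsClosed {x : ↥S | ∀ j ≤ p, x.val (κ j) = v j} := by
  have : {x : ↥S | ∀ j ≤ p, x.val (κ j) = v j} =
      ⋂ (j : ℕ) (_ : j ≤ p), (fun x : ↥S => x.val (κ j)) ⁻¹' {v j} := by
    ext x; simp [Set.mem_iInter]
  rw [this]
  refine isClosed_iInter (fun j => isClosed_iInter (fun hj => ?_))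
  exact (isClosed_discrete {v j}).preimage ((continuous_apply (κ j)).comp continuous_subtype_val)

theorem cyl_isOpen (v : ℕ → A) (p : ℕ) :
    IsOpen {x : ↥S | ∀ j ≤ p, x.val (κ j) = v j} := by
  have : {x : ↥S | ∀ j ≤ p, x.val (κ j) = v j} =
      ⋂ j ∈ Set.Iic p, (fun x : ↥S => x.val (κ j)) ⁻¹' {v j} := by
    ext x; simp [Set.mem_iInter, Set.mem_Iic]
  rw [this]
  refine (Set.finite_Iic p).isOpen_biInter (fun j _ => ?_)
  exact (isOpen_discrete {v j}).preimage ((continuous_apply (κ j)).comp continuous_subtype_val)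

/-- Cylinders around `x` form a neighborhood basis, via compactness. -/
theorem cyl_basis [Finite A] (hκ : Function.Surjective κ) (hS : IsClosed S)
    (x : ↥S) (O : Set ↥S) (hO : IsOpen O) (hxO : x ∈ O) :
    ∃ p : ℕ, {z : ↥S | ∀ j ≤ p, z.val (κ j) = x.val (κ j)} ⊆ O := by
  have hcs : CompactSpace ↥S := isCompact_iff_compactSpace.mp hS.isCompact
  by_contra hcon
  push_neg at hcon
  set F : ℕ → Set ↥S := fun p => {z : ↥S | ∀ j ≤ p, z.val (κ j) = x.val (κ j)} ∩ Oᶜ with hF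
  have hFdec : ∀ p, F (p+1) ⊆ F p := by
    intro p z hz
    exact ⟨fun j hj => hz.1 j (by omega), hz.2⟩
  have hFne : ∀ p, (F p).Nonempty := by
    intro p
    obtain ⟨z, hz1, hz2⟩ := Set.not_subset.mp (hcon p)
    exact ⟨z, hz1, hz2⟩
  have hFcl : ∀ p, IsClosed (F p) := fun p =>
    (cyl_isClosed κ (fun j => x.val (κ j)) p).inter (hO.isClosed_compl)
  have hne := IsCompact.nonempty_iInter_of_sequence_nonempty_isCompact_isClosed F hFdec hFne
    ((hFcl 0).isCompact) hFcl
  obtain ⟨z, hz⟩ := hne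
  rw [Set.mem_iInter] at hz
  have hzx : z = x := by
    apply Subtype.ext
    funext g
    obtain ⟨j, rfl⟩ := hκ g
    exact (hz j).1 j (le_refl j)
  have := (hz 0).2
  rw [hzx] at this
  exact this hxO

end Cyl

section Return
variable {G : Type*} [Group G] [Infinite G] {A : Type*} [TopologicalSpace A]
  [DiscreteTopology A] [Finite A]

/-- In a minimal subshift over an infinite group, return-time sets are infinite. -/
theorem return_infinite {X : Set (G → A)} (hXcl : IsClosed X)
    (hX2 : ∀ g : G, ∀ x ∈ X, shift g x ∈ X)
    (hmin : ∀ x ∈ X, X ⊆ closure {y | ∃ g : G, y = shift g x})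
    (x₀ : ↥X) (O : Set ↥X) (hO : IsOpen O) (hxO : x₀ ∈ O) :
    {g : G | subShift X hX2 g x₀ ∈ O}.Infinite := by
  classical
  set a : G → ↥X → ↥X := subShift X hX2 with ha
  set R : Set G := {g : G | a g x₀ ∈ O} with hR
  by_contra hinf
  rw [Set.not_infinite] at hinf
  -- ambient open set
  obtain ⟨Oa, hOa, hOeq⟩ := isOpen_induced_iff.mp hO
  have hmemO : ∀ z : ↥X, z ∈ O ↔ z.val ∈ Oa := by
    intro z
    rw [← hOeq]; rfl
  -- Step 1 : O is finite
  have h1 : O.Finite := by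
    have hXF : X ∩ Oa ⊆ (fun g => shift g x₀.val) '' R := by
      intro z hz
      have hzcl := hmin x₀.val x₀.2 hz.1
      have horbsplit : {y | ∃ g : G, y = shift g x₀.val} =
          ((fun g => shift g x₀.val) '' R) ∪ ((fun g => shift g x₀.val) '' Rᶜ) := by
        rw [← Set.image_union, Set.union_compl_self, Set.image_univ]
        ext w; simp [eq_comm]
      rw [horbsplit, closure_union] at hzcl
      have hRc : (fun g => shift g x₀.val) '' Rᶜ ⊆ Oaᶜ := by
        rintro w ⟨g, hg, rfl⟩
        intro hw
        apply hg
        rw [hR, Set.mem_setOf_eq, hmemO]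
        exact hw
      have hclR : closure ((fun g => shift g x₀.val) '' R) = (fun g => shift g x₀.val) '' R :=
        (hinf.image _).isClosed.closure_eq
      rcases hzcl with hz1 | hz1
      · rwa [hclR] at hz1
      · exfalso
        have : closure ((fun g => shift g x₀.val) '' Rᶜ) ⊆ Oaᶜ :=
          closure_minimal hRc (isClosed_compl_iff.mpr hOa)
        exact (this hz1) hz.2
    have : O ⊆ Subtype.val ⁻¹' ((fun g => shift g x₀.val) '' R) := by
      intro z hz
      exact hXF ⟨z.2, (hmemO z).mp hz⟩
    exact Set.Finite.subset (Set.Finite.preimage Subtype.val_injective.injOn (hinf.image _)) this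
  -- Step 2 : {x₀} is open
  have h2 : IsOpen ({x₀} : Set ↥X) := by
    have hsingle : ({x₀} : Set ↥X) = O ∩ (O \ {x₀})ᶜ := by
      ext z
      constructor
      · rintro rfl
        exact ⟨hxO, fun h => h.2 rfl⟩
      · rintro ⟨hz1, hz2⟩
        by_contra hne
        exact hz2 ⟨hz1, hne⟩
    rw [hsingle]
    exact hO.inter ((h1.subset Set.diff_subset).isClosed.isOpen_compl)
  -- Step 3 : every orbit singleton is open
  have h3 : ∀ g : G, IsOpen ({a g x₀} : Set ↥X) := by
    intro g
    have : ({a g x₀} : Set ↥X) = (a g⁻¹) ⁻¹' {x₀} := by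
      ext z
      simp only [Set.mem_singleton_iff, Set.mem_preimage]
      constructor
      · rintro rfl
        rw [ha, subShift_mul, inv_mul_cancel, subShift_one]
      · intro hz
        have : a g (a g⁻¹ z) = a g x₀ := by rw [hz]
        rwa [ha, subShift_mul, mul_inv_cancel, subShift_one] at this
    rw [this]
    exact (subShift_continuous hX2 g⁻¹).isOpen_preimage _ h2
  -- Step 4 : every point is on the orbit of x₀
  have h4 : ∀ z : ↥X, ∃ g : G, z = a g x₀ := by
    intro z
    obtain ⟨Ox, hOx, hOxeq⟩ := isOpen_induced_iff.mp h2
    have hx₀Ox : x₀.val ∈ Ox := by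
      have : x₀ ∈ ({x₀} : Set ↥X) := rfl
      rw [← hOxeq] at this
      exact this
    have hcl := hmin z.val z.2 x₀.2
    rw [mem_closure_iff] at hcl
    obtain ⟨w, hw1, hw2⟩ := hcl Ox hOx hx₀Ox
    obtain ⟨g, rfl⟩ := hw2
    have hwX : shift g z.val ∈ X := hX2 g z.val z.2
    have : (⟨shift g z.val, hwX⟩ : ↥X) ∈ ({x₀} : Set ↥X) := by
      rw [← hOxeq]
      exact hw1
    rw [Set.mem_singleton_iff] at this
    refine ⟨g⁻¹, ?_⟩
    rw [← this]
    apply Subtype.ext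
    show z.val = shift g⁻¹ (shift g z.val)
    rw [shift_mul, inv_mul_cancel, shift_one]
  -- Step 5 : X is finite
  have hcs : CompactSpace ↥X := isCompact_iff_compactSpace.mp hXcl.isCompact
  have h5 : Finite ↥X := by
    have hcov : (Set.univ : Set ↥X) ⊆ ⋃ z : ↥X, {z} := by
      intro z _; exact Set.mem_iUnion.mpr ⟨z, rfl⟩
    have hopen : ∀ z : ↥X, IsOpen ({z} : Set ↥X) := by
      intro z
      obtain ⟨g, rfl⟩ := h4 z
      exact h3 g
    obtain ⟨T, hT⟩ := isCompact_univ.elim_finite_subcover (fun z : ↥X => ({z} : Set ↥X))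
      hopen hcov
    have : (Set.univ : Set ↥X).Finite := by
      apply Set.Finite.subset (T.finite_toSet.biUnion (fun z _ => Set.finite_singleton z))
      exact hT
    rwa [Set.finite_univ_iff] at this
  -- Step 6 : infinite stabilizer, contradiction
  obtain ⟨z, hz⟩ := Finite.exists_infinite_fiber (fun g : G => a g x₀)
  have hzinf : ((fun g : G => a g x₀) ⁻¹' {z}).Infinite := Set.infinite_coe_iff.mp hz
  obtain ⟨h₀, hh₀⟩ := hzinf.nonempty
  have hstab : {g : G | a g x₀ = x₀}.Infinite := by
    have himg : (fun g => h₀⁻¹ * g) '' ((fun g : G => a g x₀) ⁻¹' {z}) ⊆ {g : G | a g x₀ = x₀} := by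
      rintro w ⟨g, hg, rfl⟩
      simp only [Set.mem_setOf_eq]
      have hgz : a g x₀ = z := hg
      have hh₀z : a h₀ x₀ = z := hh₀
      rw [ha, ← subShift_mul]
      show subShift X hX2 h₀⁻¹ (a g x₀) = x₀
      rw [hgz, ← hh₀z, ha, subShift_mul, inv_mul_cancel, subShift_one]
    apply Set.Infinite.mono himg
    exact (hzinf.image (mul_right_injective h₀⁻¹).injOn)
  apply hstab
  apply hinf.subset
  intro g hg
  rw [hR, Set.mem_setOf_eq]
  rw [Set.mem_setOf_eq] at hg
  rw [hg]
  exact hxO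

end Return

/-- Let `φ : G₁ → G₂` be a surjective group homomorphism, `X` and `Y`
minimal subshifts over `G₂` and `G₁` respectively, and `π : X → Y` a surjective
continuous `φ`-equivariant map. Then `(π × ⋯ × π)(INₙ(X)) = INₙ(Y)` for each `n`. -/
theorem image_of_INTuples_under_equivariant_factor
    {G₁ G₂ : Type*} [Group G₁] [Group G₂] [Countable G₁] [Countable G₂]
    [Infinite G₁] [Infinite G₂]
    {A : Type*} [Finite A] [TopologicalSpace A] [DiscreteTopology A]
    (φ : G₁ →* G₂) (hφ : Function.Surjective φ)
    (X : Set (G₂ → A)) (hX : IsSubshift X) (hXmin : IsMinimalSubshift X)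
    (Y : Set (G₁ → A)) (hY : IsSubshift Y) (hYmin : IsMinimalSubshift Y)
    (π : ↥X → ↥Y) (hπc : Continuous π) (hπs : Function.Surjective π)
    (hequiv : ∀ (g : G₁) (x : ↥X),
      (π (subShift X hX.2 (φ g) x) : G₁ → A) = shift g (π x : G₁ → A))
    (n : ℕ) :
    (fun x : Fin n → ↥X => π ∘ x) '' {x | IsINTuple (subShift X hX.2) x}
      = {y : Fin n → ↥Y | IsINTuple (subShift Y hY.2) y} := by
  classical
  obtain ⟨κ₂, hκ₂⟩ := exists_surjective_nat G₂
  obtain ⟨κ₁, hκ₁⟩ := exists_surjective_nat G₁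
  obtain ⟨xw, hxw⟩ := hXmin.1
  have hAne : Nonempty A := ⟨xw 1⟩
  have hXcomp : CompactSpace ↥X := isCompact_iff_compactSpace.mp hX.1.isCompact
  have hequiv' : ∀ (g : G₁) (x : ↥X),
      π (subShift X hX.2 (φ g) x) = subShift Y hY.2 g (π x) :=
    fun g x => Subtype.ext (hequiv g x)
  have hker : ∀ g : G₁, φ g = 1 → ∀ w : ↥Y, subShift Y hY.2 g w = w := by
    intro g hg w
    obtain ⟨x, rfl⟩ := hπs w
    rw [← hequiv' g x, hg, subShift_one]
  apply Set.Subset.antisymm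
  · -- forward inclusion
    rintro y' ⟨x, hx, rfl⟩
    simp only [Set.mem_setOf_eq] at hx ⊢
    intro V hV N
    obtain ⟨J, hJc, hJi⟩ := hx (fun i => π ⁻¹' (V i))
      (fun i => ⟨(hV i).1.preimage hπc, (hV i).2⟩) N
    set σ : G₂ → G₁ := fun h => (hφ h).choose with hσdef
    have hσ : ∀ h, φ (σ h) = h := fun h => (hφ h).choose_spec
    have hσinj : Set.InjOn σ ↑J := fun h1 _ h2 _ he => by
      rw [← hσ h1, ← hσ h2, he]
    refine ⟨J.image σ, ?_, ?_⟩
    · rw [Finset.card_image_of_injOn hσinj]; exact hJc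
    · intro I hI hne s₁
      have hsub2 : ↑(I.image φ) ⊆ (↑J : Set G₂) := by
        intro h hh
        obtain ⟨g, hg, rfl⟩ := Finset.mem_image.mp (Finset.mem_coe.mp hh)
        obtain ⟨h', hh', rfl⟩ := Finset.mem_image.mp (Finset.mem_coe.mp (hI (Finset.mem_coe.mpr hg)))
        rw [hσ h']
        exact Finset.mem_coe.mpr hh'
      obtain ⟨z, hz⟩ := hJi (I.image φ) hsub2 (hne.image φ) (fun h => s₁ (σ h))
      rw [Set.mem_iInter₂] at hz
      refine ⟨π z, ?_⟩
      rw [Set.mem_iInter₂]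
      intro g hg
      obtain ⟨h', hh', rfl⟩ := Finset.mem_image.mp (Finset.mem_coe.mp (hI hg))
      have hmem2 : φ (σ h') ∈ I.image φ := Finset.mem_image_of_mem φ hg
      have hz' := hz (φ (σ h')) hmem2
      rw [mem_subShift_inv_image] at hz'
      have hz'' : π (subShift X hX.2 (φ (σ h')) z) ∈ V (s₁ (σ (φ (σ h')))) := hz'
      rw [hequiv' (σ h') z] at hz''
      rw [hσ h'] at hz''
      rw [mem_subShift_inv_image]
      exact hz''
  · -- backward inclusion
    intro y hyIN
    simp only [Set.mem_setOf_eq] at hyIN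
    rcases Nat.eq_zero_or_pos n with h0 | hpos
    · subst h0
      refine ⟨fun i => i.elim0, ?_, ?_⟩
      · simp only [Set.mem_setOf_eq]
        intro U hU N
        obtain ⟨J, hJsub, hJcard⟩ := (Set.infinite_univ (α := G₂)).exists_subset_card_eq N
        refine ⟨J, le_of_eq hJcard.symm, ?_⟩
        intro I hI hne s
        exact (s hne.choose).elim0
      · funext i; exact i.elim0
    by_cases hdiag : ∀ i j : Fin n, y i = y j
    · -- diagonal case
      obtain ⟨x₀, hx₀⟩ := hπs (y ⟨0, hpos⟩)
      refine ⟨fun _ => x₀, ?_, ?_⟩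
      · simp only [Set.mem_setOf_eq]
        intro U hU N
        have hOopen : IsOpen (⋂ i, U i) := isOpen_iInter_of_finite (fun i => (hU i).1)
        have hx₀O : x₀ ∈ ⋂ i, U i := Set.mem_iInter.mpr (fun i => (hU i).2)
        have hret := return_infinite hX.1 hX.2 hXmin.2.2 x₀ _ hOopen hx₀O
        obtain ⟨J, hJsub, hJcard⟩ := hret.exists_subset_card_eq N
        refine ⟨J, le_of_eq hJcard.symm, ?_⟩
        intro I hI hne s
        refine ⟨x₀, ?_⟩
        rw [Set.mem_iInter₂]
        intro g hg
        rw [mem_subShift_inv_image]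
        have hgR : g ∈ {g : G₂ | subShift X hX.2 g x₀ ∈ ⋂ i, U i} := hJsub (hI hg)
        exact Set.mem_iInter.mp hgR (s g)
      · funext i
        show π x₀ = y i
        rw [hx₀]
        exact hdiag ⟨0, hpos⟩ i
    · -- main case
      push_neg at hdiag
      obtain ⟨iA, jA, hyij⟩ := hdiag
      set VY : Fin n → ℕ → Set ↥Y :=
        fun i p => {w : ↥Y | ∀ j ≤ p, w.val (κ₁ j) = (y i).val (κ₁ j)} with hVYdef
      have hVYopen : ∀ i p, IsOpen (VY i p) := fun i p => cyl_isOpen κ₁ _ p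
      have hVYclosed : ∀ i p, IsClosed (VY i p) := fun i p => cyl_isClosed κ₁ _ p
      have hVYmem : ∀ i p, y i ∈ VY i p := fun i p j hj => rfl
      have hVYanti : ∀ i (p q : ℕ), p ≤ q → VY i q ⊆ VY i p :=
        fun i p q hpq w hw j hj => hw j (le_trans hj hpq)
      have hvals : ∃ j : ℕ, (y iA).val (κ₁ j) ≠ (y jA).val (κ₁ j) := by
        by_contra hcon
        push_neg at hcon
        apply hyij
        apply Subtype.ext
        funext g
        obtain ⟨j, rfl⟩ := hκ₁ g
        exact hcon j
      obtain ⟨p₀, hp₀⟩ := hvals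
      have hdisj : ∀ q : ℕ, p₀ ≤ q → ∀ w : ↥Y, w ∈ VY iA q → w ∈ VY jA q → False := by
        intro q hq w h1 h2
        exact hp₀ ((h1 p₀ hq).symm.trans (h2 p₀ hq))
      -- B1 : pull back unbounded independence through π
      have hB1 : ∀ p : ℕ,
          UnbIndep (fun (g : G₂) (i : Fin n) => subShift X hX.2 g⁻¹ '' (π ⁻¹' (VY i p))) := by
        intro p N
        obtain ⟨J, hJc, hJi⟩ := hyIN (fun i => VY i (max p p₀))
          (fun i => ⟨hVYopen i _, hVYmem i _⟩) N
        have hinj : Set.InjOn φ ↑J := by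
          intro g hg g' hg' hφe
          by_contra hne
          have hne2 : g' ≠ g := fun h => hne h.symm
          have hsub : ↑({g, g'} : Finset G₁) ⊆ (↑J : Set G₁) := by
            intro h hh
            simp only [Finset.coe_insert, Finset.coe_singleton, Set.mem_insert_iff,
              Set.mem_singleton_iff] at hh
            rcases hh with rfl | rfl
            exacts [hg, hg']
          obtain ⟨z, hz⟩ := hJi {g, g'} hsub ⟨g, Finset.mem_insert_self g {g'}⟩
            (fun h => if h = g then iA else jA)
          rw [Set.mem_iInter₂] at hz
          have hz1 : z ∈ subShift Y hY.2 g⁻¹ '' (VY iA (max p p₀)) := by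
            have := hz g (Finset.mem_insert_self g {g'})
            simpa using this
          have hz2 : z ∈ subShift Y hY.2 g'⁻¹ '' (VY jA (max p p₀)) := by
            have := hz g' (Finset.mem_insert_of_mem (Finset.mem_singleton_self g'))
            simpa [hne2] using this
          rw [mem_subShift_inv_image] at hz1
          rw [mem_subShift_inv_image] at hz2
          have hgg' : subShift Y hY.2 g' z = subShift Y hY.2 g z := by
            have h1 : φ (g⁻¹ * g') = 1 := by
              rw [map_mul, map_inv, hφe, inv_mul_cancel]
            calc subShift Y hY.2 g' z = subShift Y hY.2 (g * (g⁻¹ * g')) z := by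
                  rw [mul_inv_cancel_left]
              _ = subShift Y hY.2 g (subShift Y hY.2 (g⁻¹ * g') z) := (subShift_mul _ _ _ _).symm
              _ = subShift Y hY.2 g z := by rw [hker _ h1]
          rw [hgg'] at hz2
          exact hdisj (max p p₀) (le_max_right _ _) _ hz1 hz2
        refine ⟨J.image φ, ?_, ?_⟩
        · rw [Finset.card_image_of_injOn hinj]; exact hJc
        · intro I₂ hI₂ hne₂ s₂
          set I₁ : Finset G₁ := J.filter (fun g => φ g ∈ I₂) with hI₁def
          have hI₁sub : ↑I₁ ⊆ (↑J : Set G₁) :=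
            fun g hg => Finset.mem_coe.mpr (Finset.mem_of_mem_filter _ (Finset.mem_coe.mp hg))
          have hI₁ne : I₁.Nonempty := by
            obtain ⟨h, hh⟩ := hne₂
            have hhim := hI₂ hh
            rw [Finset.mem_image] at hhim
            obtain ⟨g, hgJ, rfl⟩ := hhim
            exact ⟨g, Finset.mem_filter.mpr ⟨hgJ, hh⟩⟩
          obtain ⟨w, hw⟩ := hJi I₁ hI₁sub hI₁ne (fun g => s₂ (φ g))
          rw [Set.mem_iInter₂] at hw
          obtain ⟨x, hx⟩ := hπs w
          refine ⟨x, ?_⟩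
          rw [Set.mem_iInter₂]
          intro h hh
          have hhim : h ∈ J.image φ := hI₂ hh
          rw [Finset.mem_image] at hhim
          obtain ⟨g, hgJ, rfl⟩ := hhim
          have hgI₁ : g ∈ I₁ := Finset.mem_filter.mpr ⟨hgJ, hh⟩
          have hw' := hw g hgI₁
          rw [mem_subShift_inv_image] at hw'
          have hw'' : subShift Y hY.2 g w ∈ VY (s₂ (φ g)) (max p p₀) := hw'
          rw [mem_subShift_inv_image]
          show subShift X hX.2 (φ g) x ∈ π ⁻¹' (VY (s₂ (φ g)) p)
          rw [Set.mem_preimage, hequiv', hx]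
          exact hVYanti _ p (max p p₀) (le_max_left _ _) hw''
      -- pieces of the cylinder partition of X at level m
      set PP : (m : ℕ) → (Fin (m+1) → A) → Set ↥X :=
        fun m w => {x : ↥X | ∀ j : Fin (m+1), x.val (κ₂ j.val) = w j} with hPPdef
      have hPPclosed : ∀ m w, IsClosed (PP m w) := by
        intro m w
        have heq : PP m w = ⋂ j : Fin (m+1), (fun x : ↥X => x.val (κ₂ j.val)) ⁻¹' {w j} := by
          ext z
          simp [hPPdef, Set.mem_iInter]
        rw [heq]
        exact isClosed_iInter (fun j =>
          (isClosed_discrete _).preimage ((continuous_apply _).comp continuous_subtype_val))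
      have hPPcover : ∀ (m : ℕ) (z : ↥X), ∃ w, z ∈ PP m w :=
        fun m z => ⟨fun j => z.val (κ₂ j.val), fun j => rfl⟩
      -- the inductive refinement step
      have hstep : ∀ (m : ℕ) (Cc : Fin n → Set ↥X),
          (∀ p, UnbIndep (fun (g : G₂) (i : Fin n) =>
            subShift X hX.2 g⁻¹ '' (Cc i ∩ π ⁻¹' (VY i p)))) →
          ∃ Cc' : Fin n → Set ↥X,
            (∀ p, UnbIndep (fun (g : G₂) (i : Fin n) =>
              subShift X hX.2 g⁻¹ '' (Cc' i ∩ π ⁻¹' (VY i p)))) ∧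
            (∀ i, Cc' i ⊆ Cc i) ∧ (∀ i, IsClosed (Cc i) → IsClosed (Cc' i)) ∧
            (∀ i, ∀ z ∈ Cc' i, ∀ z' ∈ Cc' i, ∀ j ≤ m, z.val (κ₂ j) = z'.val (κ₂ j)) := by
        intro m Cc hPhi
        obtain ⟨wsel, hwsel⟩ := zoom_pigeon (ι := Fin (m+1) → A)
          (fun (g : G₂) (S : Set ↥X) => subShift X hX.2 g⁻¹ '' S)
          (fun g => Set.monotone_image)
          (fun g κ' t => Set.image_iUnion₂ _ _)
          Cc (fun i p => π ⁻¹' (VY i p))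
          (fun i p q hpq => Set.preimage_mono (hVYanti i p q hpq))
          (PP m) (hPPcover m) hPhi
        refine ⟨fun i => Cc i ∩ PP m (wsel i), hwsel, fun i => Set.inter_subset_left,
          fun i hcl => hcl.inter (hPPclosed m (wsel i)), ?_⟩
        intro i z hz z' hz' j hj
        have h1 := hz.2 ⟨j, by omega⟩
        have h2 := hz'.2 ⟨j, by omega⟩
        exact h1.trans h2.symm
      -- base of the recursion
      have hPhi0 : ∀ p, UnbIndep (fun (g : G₂) (i : Fin n) =>
          subShift X hX.2 g⁻¹ '' ((Set.univ : Set ↥X) ∩ π ⁻¹' (VY i p))) := by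
        intro p
        have h1 := hB1 p
        have heq : (fun (g : G₂) (i : Fin n) => subShift X hX.2 g⁻¹ '' (π ⁻¹' (VY i p)))
            = fun (g : G₂) (i : Fin n) =>
              subShift X hX.2 g⁻¹ '' ((Set.univ : Set ↥X) ∩ π ⁻¹' (VY i p)) := by
          funext g i
          rw [Set.univ_inter]
        rwa [heq] at h1
      choose stepf hstepPhi hstepsub hstepcl hstepagree using hstep
      set CS : ℕ → {c : Fin n → Set ↥X //
          (∀ p, UnbIndep (fun (g : G₂) (i : Fin n) =>
            subShift X hX.2 g⁻¹ '' (c i ∩ π ⁻¹' (VY i p)))) ∧ ∀ i, IsClosed (c i)} :=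
        fun m => Nat.rec ⟨fun _ => Set.univ, hPhi0, fun i => isClosed_univ⟩
          (fun m prev => ⟨stepf m prev.1 prev.2.1, hstepPhi m prev.1 prev.2.1,
            fun i => hstepcl m prev.1 prev.2.1 i (prev.2.2 i)⟩) m with hCSdef
      have hagree : ∀ m i, ∀ z ∈ (CS (m+1)).1 i, ∀ z' ∈ (CS (m+1)).1 i, ∀ j ≤ m,
          z.val (κ₂ j) = z'.val (κ₂ j) :=
        fun m => hstepagree m (CS m).1 (CS m).2.1
      have hsub : ∀ m i, (CS (m+1)).1 i ⊆ (CS m).1 i :=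
        fun m => hstepsub m (CS m).1 (CS m).2.1
      -- extract the limit points
      have hlim : ∀ i : Fin n, ∃ x' : ↥X, ∀ m : ℕ, x' ∈ (CS m).1 i ∩ π ⁻¹' (VY i m) := by
        intro i
        set E : ℕ → Set ↥X := fun m => (CS m).1 i ∩ π ⁻¹' (VY i m) with hEdef
        have hEdec : ∀ m, E (m+1) ⊆ E m := by
          intro m z hz
          exact ⟨hsub m i hz.1, Set.preimage_mono (hVYanti i m (m+1) (by omega)) hz.2⟩
        have hEne : ∀ m, (E m).Nonempty := by
          intro m
          obtain ⟨J, hJc, hJi⟩ := (CS m).2.1 m 1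
          have hJne : J.Nonempty := by rw [← Finset.card_pos]; omega
          obtain ⟨g₀, hg₀⟩ := hJne
          obtain ⟨z, hz⟩ := hJi {g₀} (Finset.singleton_subset_iff.mpr hg₀)
            ⟨g₀, Finset.mem_singleton_self g₀⟩ (fun _ => i)
          rw [Set.mem_iInter₂] at hz
          have hz' := hz g₀ (Finset.mem_singleton_self g₀)
          exact Set.Nonempty.of_image ⟨z, hz'⟩
        have hEcl : ∀ m, IsClosed (E m) := fun m =>
          ((CS m).2.2 i).inter ((hVYclosed i m).preimage hπc)
        have hne := IsCompact.nonempty_iInter_of_sequence_nonempty_isCompact_isClosed E hEdec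
          hEne ((hEcl 0).isCompact) hEcl
        obtain ⟨x', hx'⟩ := hne
        rw [Set.mem_iInter] at hx'
        exact ⟨x', hx'⟩
      choose xx hxx using hlim
      refine ⟨xx, ?_, ?_⟩
      · -- xx is an IN-tuple
        simp only [Set.mem_setOf_eq]
        intro U hU N
        have hbas : ∀ i : Fin n, ∃ p : ℕ,
            {z : ↥X | ∀ j ≤ p, z.val (κ₂ j) = (xx i).val (κ₂ j)} ⊆ U i :=
          fun i => cyl_basis κ₂ hκ₂ hX.1 (xx i) (U i) (hU i).1 (hU i).2
        choose pf hpf using hbas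
        set M : ℕ := Finset.univ.sup pf with hM
        have hCU : ∀ i, (CS (M+1)).1 i ⊆ U i := by
          intro i z hz
          apply hpf i
          intro j hj
          have hjM : j ≤ M := le_trans hj (Finset.le_sup (Finset.mem_univ i))
          exact hagree M i z hz (xx i) (hxx i (M+1)).1 j hjM
        obtain ⟨J, hJc, hJi⟩ := (CS (M+1)).2.1 0 N
        refine ⟨J, hJc, ?_⟩
        intro I hI hne s
        obtain ⟨z, hz⟩ := hJi I (Finset.coe_subset.mp hI) hne s
        refine ⟨z, ?_⟩
        rw [Set.mem_iInter₂] at hz ⊢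
        intro g hg
        exact Set.image_mono (Set.inter_subset_left.trans (hCU (s g))) (hz g hg)
      · -- π ∘ xx = y
        show π ∘ xx = y
        funext i
        show π (xx i) = y i
        apply Subtype.ext
        funext g
        obtain ⟨j, rfl⟩ := hκ₁ g
        exact (hxx i j).2 j (le_refl j)
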